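/- Let T be a uniform tree, G = Aut(T), Γ ⊂ G a torsion-free uniform lattice, Y = Γ\T, and π : T → Y the canonical projection. The group Γ acts on the set of covering maps T → Y by precomposition (via its action on T). Then the bijection Γg ↦ π∘g between Γ\G and covering maps T → Y restricts, for every n ≥ 1, to a bijection between Γ\Comm_n(Γ, G) and the set of covering maps T → Y whose Γ-orbit has size exactly n. -/

import Mathlib

section CommensurizerDefs

variable {G : Type*} [Group G]

/-- The conjugate subgroup `A ^ g = g⁻¹ A g`. -/
def conjSubgroup (g : G) (A : Subgroup G) : Subgroup G :=
  A.map (MulAut.conj g⁻¹).toMonoidHom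

/-- `χ_{A,G}(g) = [A : A ∩ A^g]` (`0` if the index is infinite). -/
noncomputable def commIndex (A : Subgroup G) (g : G) : ℕ :=
  (conjSubgroup g A).relIndex A

/-- `Comm_n(A, G) = {g : [A : A ∩ A^g] = n and [A^g : A ∩ A^g] < ∞}`. -/
def commSet (A : Subgroup G) (n : ℕ) : Set G :=
  {g : G | ((conjSubgroup g A).relIndex A ≠ 0 ∧ A.relIndex (conjSubgroup g A) ≠ 0) ∧
    commIndex A g = n}

end CommensurizerDefs

/-- A graph in the sense of Serre: a vertex set `V`, a set `E` of oriented edges with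
initial-vertex map `init` and a fixed-point-free involution `bar` (orientation
reversal). This allows loops and multiple edges, as needed for quotient graphs. -/
structure SGraph : Type 1 where
  V : Type
  E : Type
  init : E → V
  bar : E → E
  bar_invol : ∀ e, bar (bar e) = e
  bar_ne : ∀ e, bar e ≠ e

namespace SGraph

/-- The terminal vertex of an oriented edge. -/
def term (X : SGraph) (e : X.E) : X.V := X.init (X.bar e)

/-- The star of a vertex: the set of oriented edges starting at it. -/
def star (X : SGraph) (v : X.V) : Set X.E := {e : X.E | X.init e = v}

/-- A morphism of graphs. -/
@[ext] structure Hom (X Y : SGraph) where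
  fV : X.V → Y.V
  fE : X.E → Y.E
  init_comm : ∀ e, Y.init (fE e) = fV (X.init e)
  bar_comm : ∀ e, Y.bar (fE e) = fE (X.bar e)

/-- The identity morphism. -/
def Hom.id (X : SGraph) : Hom X X :=
  ⟨fun v => v, fun e => e, fun _ => rfl, fun _ => rfl⟩

/-- Composition of graph morphisms. -/
def Hom.comp {X Y Z : SGraph} (f : Hom Y Z) (g : Hom X Y) : Hom X Z :=
  ⟨f.fV ∘ g.fV, f.fE ∘ g.fE,
    fun e => by simp [Function.comp, f.init_comm, g.init_comm],
    fun e => by simp [Function.comp, f.bar_comm, g.bar_comm]⟩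

theorem Hom.comp_assoc {W X Y Z : SGraph} (f : Hom Y Z) (g : Hom X Y) (h : Hom W X) :
    (f.comp g).comp h = f.comp (g.comp h) := rfl

theorem Hom.comp_id {X Y : SGraph} (f : Hom X Y) : f.comp (Hom.id X) = f := rfl

theorem Hom.id_comp {X Y : SGraph} (f : Hom X Y) : (Hom.id Y).comp f = f := rfl

/-- A graph morphism is a covering map if it is a local bijection, i.e. restricts to a
bijection from the star of each vertex onto the star of its image. -/
def Hom.IsCovering {X Y : SGraph} (f : Hom X Y) : Prop :=
  ∀ v : X.V, Set.BijOn f.fE (X.star v) (Y.star (f.fV v))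

/-- An automorphism of a graph. -/
@[ext] structure Aut (X : SGraph) where
  toHom : Hom X X
  invHom : Hom X X
  left_inv : toHom.comp invHom = Hom.id X
  right_inv : invHom.comp toHom = Hom.id X

namespace Aut

variable {X : SGraph}

instance : Mul (Aut X) :=
  ⟨fun a b =>
    ⟨a.toHom.comp b.toHom, b.invHom.comp a.invHom, by
      rw [Hom.comp_assoc, ← Hom.comp_assoc b.toHom, b.left_inv, Hom.id_comp, a.left_inv], by
      rw [Hom.comp_assoc, ← Hom.comp_assoc a.invHom, a.right_inv, Hom.id_comp, b.right_inv]⟩⟩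

instance : One (Aut X) := ⟨⟨Hom.id X, Hom.id X, rfl, rfl⟩⟩

instance : Inv (Aut X) := ⟨fun a => ⟨a.invHom, a.toHom, a.right_inv, a.left_inv⟩⟩

@[simp] theorem mul_toHom (a b : Aut X) : (a * b).toHom = a.toHom.comp b.toHom := rfl
@[simp] theorem mul_invHom (a b : Aut X) : (a * b).invHom = b.invHom.comp a.invHom := rfl
@[simp] theorem one_toHom : (1 : Aut X).toHom = Hom.id X := rfl
@[simp] theorem one_invHom : (1 : Aut X).invHom = Hom.id X := rfl
@[simp] theorem inv_toHom (a : Aut X) : a⁻¹.toHom = a.invHom := rfl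
@[simp] theorem inv_invHom (a : Aut X) : a⁻¹.invHom = a.toHom := rfl

instance : Group (Aut X) where
  mul_assoc a b c := rfl
  one_mul a := rfl
  mul_one a := rfl
  inv_mul_cancel a := by
    refine Aut.ext ?_ ?_
    · simpa using a.right_inv
    · simpa using a.right_inv

/-- Automorphisms act on the vertices of a graph. -/
instance : MulAction (Aut X) X.V where
  smul a v := a.toHom.fV v
  one_smul v := rfl
  mul_smul a b v := rfl

/-- Automorphisms act on the edges of a graph. -/
instance : MulAction (Aut X) X.E where
  smul a e := a.toHom.fE e
  one_smul e := rfl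
  mul_smul a b e := rfl

@[simp] theorem smul_V_def (a : Aut X) (v : X.V) : a • v = a.toHom.fV v := rfl
@[simp] theorem smul_E_def (a : Aut X) (e : X.E) : a • e = a.toHom.fE e := rfl

end Aut

/-- A graph is connected if any two vertices are joined by an edge path. -/
def Connected (X : SGraph) : Prop :=
  ∀ u v : X.V,
    Relation.ReflTransGen (fun x y : X.V => ∃ e : X.E, X.init e = x ∧ X.term e = y) u v

/-- A graph is a tree if it is nonempty, connected, and has no reduced closed edge path
of positive length. -/
def IsTreeS (X : SGraph) : Prop :=
  Nonempty X.V ∧ Connected X ∧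
    ∀ (n : ℕ) (c : Fin (n + 1) → X.E),
      (∀ i : Fin n, X.init (c i.succ) = X.term (c i.castSucc)) →
      (∀ i : Fin n, c i.succ ≠ X.bar (c i.castSucc)) →
      X.term (c (Fin.last n)) ≠ X.init (c 0)

/-- A graph is locally finite if all its stars are finite, and finite if it has finitely
many vertices and edges. -/
def LocallyFiniteS (X : SGraph) : Prop := ∀ v : X.V, (X.star v).Finite

variable (X : SGraph) (Γ : Subgroup (Aut X))

/-- The quotient graph `Γ\X` of a graph `X` by a subgroup `Γ ≤ Aut(X)` acting without
inversions (`hni`): vertices are `Γ`-orbits of vertices, edges are `Γ`-orbits of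
oriented edges. -/
def quotSG (hni : ∀ (γ : ↥Γ) (e : X.E), (γ : Aut X) • e ≠ X.bar e) : SGraph where
  V := Quotient (MulAction.orbitRel ↥Γ X.V)
  E := Quotient (MulAction.orbitRel ↥Γ X.E)
  init := Quotient.lift (fun e => (⟦X.init e⟧ : Quotient (MulAction.orbitRel ↥Γ X.V)))
    (by
      rintro e e' ⟨γ, rfl⟩
      exact Quotient.sound ⟨γ, ((γ : Aut X).toHom.init_comm e').symm⟩)
  bar := Quotient.lift (fun e => (⟦X.bar e⟧ : Quotient (MulAction.orbitRel ↥Γ X.E)))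
    (by
      rintro e e' ⟨γ, rfl⟩
      refine Quotient.sound ⟨γ, ?_⟩
      exact ((γ : Aut X).toHom.bar_comm e').symm)
  bar_invol := by
    rintro ⟨e⟩
    exact congrArg (Quotient.mk _) (X.bar_invol e)
  bar_ne := by
    rintro ⟨e⟩ h
    obtain ⟨γ, hγ⟩ := Quotient.exact h
    exact hni γ e hγ

/-- The canonical projection `X → Γ\X`. -/
def quotHom (hni : ∀ (γ : ↥Γ) (e : X.E), (γ : Aut X) • e ≠ X.bar e) :
    Hom X (quotSG X Γ hni) :=
  ⟨fun v => ⟦v⟧, fun e => ⟦e⟧, fun _ => rfl, fun _ => rfl⟩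

end SGraph

namespace SGraph

variable {X Y W : SGraph}

def IsWalk (X : SGraph) : X.V → List X.E → X.V → Prop
  | u, [], v => u = v
  | u, e :: l, v => X.init e = u ∧ X.IsWalk (X.term e) l v

theorem IsWalk.append {u v w : X.V} {l₁ l₂ : List X.E} (h₁ : X.IsWalk u l₁ v)
    (h₂ : X.IsWalk v l₂ w) : X.IsWalk u (l₁ ++ l₂) w := by
  induction l₁ generalizing u with
  | nil => simp only [IsWalk] at h₁; subst h₁; simpa using h₂
  | cons e l ih => exact ⟨h₁.1, ih h₁.2⟩

theorem IsWalk.split {u w : X.V} {l₁ l₂ : List X.E} (h : X.IsWalk u (l₁ ++ l₂) w) :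
    ∃ v, X.IsWalk u l₁ v ∧ X.IsWalk v l₂ w := by
  induction l₁ generalizing u with
  | nil => exact ⟨u, rfl, by simpa using h⟩
  | cons e l ih =>
      obtain ⟨v, hv1, hv2⟩ := ih h.2
      exact ⟨v, ⟨h.1, hv1⟩, hv2⟩

theorem IsWalk.head {u v : X.V} {l : List X.E} (h : X.IsWalk u l v) (hl : 0 < l.length) :
    X.init (l[0]'hl) = u := by
  cases l with
  | nil => simp at hl
  | cons e l => exact h.1

theorem IsWalk.chain {u v : X.V} {l : List X.E} (h : X.IsWalk u l v) :
    ∀ i, (hi : i + 1 < l.length) → X.init (l[i+1]'hi) = X.term (l[i]'(Nat.lt_of_succ_lt hi)) := by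
  induction l generalizing u with
  | nil => intro i hi; simp at hi
  | cons e l ih =>
      intro i hi
      cases i with
      | zero => simpa using h.2.head (by simpa using hi)
      | succ j => exact ih h.2 j (by simpa using hi)

theorem IsWalk.last {u v : X.V} {l : List X.E} (h : X.IsWalk u l v) (hl : 0 < l.length) :
    X.term (l[l.length - 1]'(by omega)) = v := by
  induction l generalizing u with
  | nil => simp at hl
  | cons e l ih =>
      cases l with
      | nil => simpa [IsWalk] using h.2
      | cons e' l' => simpa using ih h.2 (by simp)


theorem exists_walk (hc : Connected X) (u v : X.V) : ∃ l, X.IsWalk u l v := by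
  induction hc u v with
  | refl => exact ⟨[], rfl⟩
  | tail hab hbc ih =>
      obtain ⟨l, hl⟩ := ih
      obtain ⟨e, he1, he2⟩ := hbc
      exact ⟨l ++ [e], hl.append ⟨he1, he2⟩⟩

/-- Reversal of a walk. -/
def wrev (X : SGraph) (l : List X.E) : List X.E := (l.map X.bar).reverse

theorem IsWalk.rev {u v : X.V} {l : List X.E} (h : X.IsWalk u l v) :
    X.IsWalk v (X.wrev l) u := by
  induction l generalizing u with
  | nil => exact h.symm
  | cons e l ih =>
      have : X.wrev (e :: l) = X.wrev l ++ [X.bar e] := by simp [wrev]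
      rw [this]
      refine (ih h.2).append ⟨rfl, ?_⟩
      show X.init (X.bar (X.bar e)) = u
      rw [X.bar_invol]; exact h.1

theorem exists_backtrack (ht : X.IsTreeS) {x : X.V} {l : List X.E} (hne : l ≠ [])
    (hw : X.IsWalk x l x) :
    ∃ (i : ℕ) (h : i + 1 < l.length),
      l[i+1]'h = X.bar (l[i]'(Nat.lt_of_succ_lt h)) := by
  by_contra hcon
  push_neg at hcon
  obtain ⟨n, hn⟩ : ∃ n, l.length = n + 1 :=
    Nat.exists_eq_succ_of_ne_zero (by simpa using hne)
  set c : Fin (n + 1) → X.E := fun i => l[i.1]'(by omega) with hc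
  refine ht.2.2 n c (fun i => ?_) (fun i => ?_) ?_
  · exact hw.chain i.1 (by omega)
  · exact hcon i.1 (by omega)
  · have h1 : X.term (c (Fin.last n)) = x := by
      have := hw.last (by omega)
      simpa [hc, Fin.last, hn] using this
    have h2 : X.init (c 0) = x := hw.head (by omega)
    rw [h1, h2]


theorem Hom.term_comm {X Y : SGraph} (f : Hom X Y) (e : X.E) :
    Y.term (f.fE e) = f.fV (X.term e) := by
  show Y.init (Y.bar (f.fE e)) = f.fV (X.init (X.bar e))
  rw [f.bar_comm, f.init_comm]

theorem Aut.toHom_inj {a b : Aut X} (h : a.toHom = b.toHom) : a = b := by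
  refine Aut.ext h ?_
  have h2 : a.invHom = a.invHom.comp (b.toHom.comp b.invHom) := by
    rw [b.left_inv, Hom.comp_id]
  rw [h2, ← h, ← Hom.comp_assoc, a.right_inv, Hom.id_comp]

theorem IsWalk.map (f : Hom X Y) {u v : X.V} {l : List X.E}
    (h : X.IsWalk u l v) : Y.IsWalk (f.fV u) (l.map f.fE) (f.fV v) := by
  induction l generalizing u with
  | nil => exact congrArg f.fV h
  | cons e l ih =>
      refine ⟨by rw [f.init_comm, h.1], ?_⟩
      rw [f.term_comm]
      exact ih h.2

theorem wrev_map (f : Hom X Y) (l : List X.E) :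
    (X.wrev l).map f.fE = Y.wrev (l.map f.fE) := by
  have hb : f.fE ∘ X.bar = Y.bar ∘ f.fE := funext fun e => (f.bar_comm e).symm
  simp [wrev, List.map_map, hb]

open Classical in
/-- Lift a walk through a morphism, step by step (skipping non-liftable steps). -/
noncomputable def liftWalkV (p : Hom W Y) : W.V → List Y.E → W.V
  | w, [] => w
  | w, ε :: l =>
      if h : ∃ e, W.init e = w ∧ p.fE e = ε then liftWalkV p (W.term h.choose) l
      else liftWalkV p w l

@[simp] theorem liftWalkV_nil (p : Hom W Y) (w : W.V) : liftWalkV p w [] = w := rfl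

theorem cov_exists {p : Hom W Y} (hp : p.IsCovering) {w : W.V} {ε : Y.E}
    (h : Y.init ε = p.fV w) : ∃ e, W.init e = w ∧ p.fE e = ε := by
  obtain ⟨e, he, hpe⟩ := (hp w).surjOn (show ε ∈ Y.star (p.fV w) from h)
  exact ⟨e, he, hpe⟩

theorem cov_unique {p : Hom W Y} (hp : p.IsCovering) {w : W.V} {e e' : W.E}
    (h1 : W.init e = w) (h2 : W.init e' = w) (h3 : p.fE e = p.fE e') : e = e' :=
  (hp w).injOn h1 h2 h3

theorem liftWalkV_step {p : Hom W Y} (hp : p.IsCovering) {w : W.V} {e : W.E} {ε : Y.E}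
    (h1 : W.init e = w) (h2 : p.fE e = ε) (l : List Y.E) :
    liftWalkV p w (ε :: l) = liftWalkV p (W.term e) l := by
  have hex : ∃ e, W.init e = w ∧ p.fE e = ε := ⟨e, h1, h2⟩
  have hch : hex.choose = e :=
    cov_unique hp hex.choose_spec.1 h1 (by rw [hex.choose_spec.2, h2])
  rw [liftWalkV, dif_pos hex, hch]

theorem liftWalkV_spec {p : Hom W Y} (hp : p.IsCovering) {l : List Y.E} :
    ∀ {u : Y.V} {w : W.V}, Y.IsWalk (p.fV w) l u → p.fV (liftWalkV p w l) = u := by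
  induction l with
  | nil => intro u w h; simpa [IsWalk] using h
  | cons ε l ih =>
      intro u w h
      obtain ⟨e, he, hpe⟩ := cov_exists hp h.1
      rw [liftWalkV_step hp he hpe]
      apply ih
      have hterm : p.fV (W.term e) = Y.term ε := by rw [← p.term_comm, hpe]
      rw [hterm]
      exact h.2

theorem liftWalkV_append (p : Hom W Y) (w : W.V) (l₁ l₂ : List Y.E) :
    liftWalkV p w (l₁ ++ l₂) = liftWalkV p (liftWalkV p w l₁) l₂ := by
  induction l₁ generalizing w with
  | nil => rfl
  | cons ε l ih =>
      rw [List.cons_append, liftWalkV, liftWalkV]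
      split
      · exact ih _
      · exact ih _

theorem term_bar_eq {w : X.V} {e : X.E} (h : X.init e = w) : X.term (X.bar e) = w := by
  show X.init (X.bar (X.bar e)) = w
  rw [X.bar_invol]; exact h

theorem liftWalkV_backtrack {p : Hom W Y} (hp : p.IsCovering) {w : W.V} {ε : Y.E}
    (h : Y.init ε = p.fV w) (l : List Y.E) :
    liftWalkV p w (ε :: Y.bar ε :: l) = liftWalkV p w l := by
  obtain ⟨e, he, hpe⟩ := cov_exists hp h
  rw [liftWalkV_step hp he hpe,
    liftWalkV_step hp (show W.init (W.bar e) = W.term e from rfl) (by rw [← p.bar_comm, hpe]),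
    term_bar_eq he]

theorem liftWalkV_rev {p : Hom W Y} (hp : p.IsCovering) :
    ∀ {l : List Y.E} {u : Y.V} {w : W.V}, Y.IsWalk (p.fV w) l u →
      liftWalkV p (liftWalkV p w l) (Y.wrev l) = w := by
  intro l
  induction l with
  | nil => intro u w _; rfl
  | cons ε l ih =>
      intro u w h
      obtain ⟨e, he, hpe⟩ := cov_exists hp h.1
      rw [liftWalkV_step hp he hpe]
      have hwrev : Y.wrev (ε :: l) = Y.wrev l ++ [Y.bar ε] := by simp [wrev]
      have hterm : p.fV (W.term e) = Y.term ε := by rw [← p.term_comm, hpe]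
      have h2 : Y.IsWalk (p.fV (W.term e)) l u := by rw [hterm]; exact h.2
      rw [hwrev, liftWalkV_append, ih h2,
        liftWalkV_step hp (show W.init (W.bar e) = W.term e from rfl)
          (by rw [← p.bar_comm, hpe]),
        term_bar_eq he]
      rfl

theorem exists_backtrack' (ht : X.IsTreeS) {x : X.V} {l : List X.E} (hne : l ≠ [])
    (hw : X.IsWalk x l x) :
    ∃ (e : X.E) (l₁ l₂ : List X.E), l = l₁ ++ e :: X.bar e :: l₂ := by
  obtain ⟨i, hi, hbt⟩ := exists_backtrack ht hne hw
  have hii : i < l.length := Nat.lt_of_succ_lt hi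
  refine ⟨l[i]'hii, l.take i, l.drop (i + 2), ?_⟩
  conv_lhs => rw [← List.take_append_drop i l]
  rw [List.drop_eq_getElem_cons hii, List.drop_eq_getElem_cons hi, hbt]

theorem liftWalkV_closed (ht : X.IsTreeS) {p : Hom W Y} (hp : p.IsCovering)
    (f : Hom X Y) :
    ∀ (n : ℕ) (l : List X.E), l.length = n → ∀ (x : X.V) (w : W.V), X.IsWalk x l x →
      p.fV w = f.fV x → liftWalkV p w (l.map f.fE) = w := by
  intro n
  induction n using Nat.strong_induction_on with
  | _ n ih =>
    intro l hl x w hw hpw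
    by_cases hne : l = []
    · subst hne; rfl
    · obtain ⟨e, l₁, l₂, rfl⟩ := exists_backtrack' ht hne hw
      obtain ⟨a, ha1, ha2⟩ := hw.split
      have hl₂ : X.IsWalk a l₂ x := by
        have h3 := ha2.2.2
        rwa [term_bar_eq ha2.1] at h3
      have hw' : X.IsWalk x (l₁ ++ l₂) x := ha1.append hl₂
      have hlen' : (l₁ ++ l₂).length < n := by simp at hl ⊢; omega
      have hpa : p.fV (liftWalkV p w (l₁.map f.fE)) = f.fV a := by
        apply liftWalkV_spec hp
        rw [hpw]; exact ha1.map f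
      have hinit : Y.init (f.fE e) = p.fV (liftWalkV p w (l₁.map f.fE)) := by
        rw [hpa, f.init_comm, ha2.1]
      calc liftWalkV p w ((l₁ ++ e :: X.bar e :: l₂).map f.fE)
          = liftWalkV p w (l₁.map f.fE ++ (f.fE e :: Y.bar (f.fE e) :: l₂.map f.fE)) := by
            rw [List.map_append]
            simp [f.bar_comm]
        _ = liftWalkV p (liftWalkV p w (l₁.map f.fE))
              (f.fE e :: Y.bar (f.fE e) :: l₂.map f.fE) := liftWalkV_append ..
        _ = liftWalkV p (liftWalkV p w (l₁.map f.fE)) (l₂.map f.fE) :=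
            liftWalkV_backtrack hp hinit _
        _ = liftWalkV p w ((l₁ ++ l₂).map f.fE) := by rw [List.map_append, liftWalkV_append]
        _ = w := ih _ hlen' _ rfl x w hw' hpw

theorem lift_unique {p : Hom W Y} (hp : p.IsCovering) (hc : Connected X)
    {g₁ g₂ : Hom X W} (hcomp : p.comp g₁ = p.comp g₂) (x₀ : X.V)
    (h₀ : g₁.fV x₀ = g₂.fV x₀) : g₁ = g₂ := by
  have hV : ∀ v, p.fV (g₁.fV v) = p.fV (g₂.fV v) := fun v =>
    congrFun (congrArg Hom.fV hcomp) v
  have hE : ∀ e, p.fE (g₁.fE e) = p.fE (g₂.fE e) := fun e =>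
    congrFun (congrArg Hom.fE hcomp) e
  have eStep : ∀ v, g₁.fV v = g₂.fV v → ∀ e, X.init e = v → g₁.fE e = g₂.fE e := by
    intro v hv e he
    exact cov_unique hp (by rw [g₁.init_comm, he])
      (by rw [g₂.init_comm, he]; exact hv.symm) (hE e)
  have hVall : ∀ v, g₁.fV v = g₂.fV v := by
    intro v
    induction hc x₀ v with
    | refl => exact h₀
    | tail hab hbc ih =>
        obtain ⟨e, he1, he2⟩ := hbc
        have hee := eStep _ ih e he1
        rw [← he2, ← g₁.term_comm, ← g₂.term_comm, hee]
  exact Hom.ext (funext hVall) (funext fun e => eStep _ (hVall _) e rfl)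

theorem exists_lift (ht : X.IsTreeS) {p : Hom W Y} (hp : p.IsCovering) (f : Hom X Y)
    (x₀ : X.V) (w₀ : W.V) (h₀ : p.fV w₀ = f.fV x₀) :
    ∃ g : Hom X W, p.comp g = f ∧ g.fV x₀ = w₀ := by
  classical
  have hwalk : ∀ v, ∃ l, X.IsWalk x₀ l v := fun v => exists_walk ht.2.1 x₀ v
  let wk : X.V → List X.E := fun v => (hwalk v).choose
  have hwk : ∀ v, X.IsWalk x₀ (wk v) v := fun v => (hwalk v).choose_spec
  let gV : X.V → W.V := fun v => liftWalkV p w₀ ((wk v).map f.fE)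
  have key : ∀ (v : X.V) (l : List X.E), X.IsWalk x₀ l v →
      liftWalkV p w₀ (l.map f.fE) = gV v := by
    intro v l hl
    have hmap : Y.IsWalk (p.fV w₀) (l.map f.fE) (f.fV v) := by rw [h₀]; exact hl.map f
    have hw1 : p.fV (liftWalkV p w₀ (l.map f.fE)) = f.fV v := liftWalkV_spec hp hmap
    have hclosed : X.IsWalk v (X.wrev l ++ wk v) v := hl.rev.append (hwk v)
    have h1 := liftWalkV_closed ht hp f _ _ rfl v _ hclosed hw1
    rw [List.map_append, liftWalkV_append, wrev_map, liftWalkV_rev hp hmap] at h1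
    exact h1.symm
  have hpgV : ∀ v, p.fV (gV v) = f.fV v := fun v =>
    liftWalkV_spec hp (by rw [h₀]; exact (hwk v).map f)
  have hstar : ∀ e : X.E, ∃ et, W.init et = gV (X.init e) ∧ p.fE et = f.fE e := by
    intro e
    apply cov_exists hp
    rw [hpgV, f.init_comm]
  let gE : X.E → W.E := fun e => (hstar e).choose
  have hgE1 : ∀ e, W.init (gE e) = gV (X.init e) := fun e => (hstar e).choose_spec.1
  have hgE2 : ∀ e, p.fE (gE e) = f.fE e := fun e => (hstar e).choose_spec.2
  have hgterm : ∀ e, W.term (gE e) = gV (X.term e) := by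
    intro e
    have hwalk2 : X.IsWalk x₀ (wk (X.init e) ++ [e]) (X.term e) :=
      (hwk _).append ⟨rfl, rfl⟩
    have h2 := key _ _ hwalk2
    rw [List.map_append, liftWalkV_append, List.map_cons, List.map_nil,
      liftWalkV_step hp (hgE1 e) (hgE2 e), liftWalkV_nil] at h2
    exact h2
  refine ⟨⟨gV, gE, fun e => hgE1 e, fun e => ?_⟩, ?_, ?_⟩
  · exact cov_unique hp (hgterm e) (hgE1 (X.bar e))
      (by rw [← p.bar_comm, hgE2 e, f.bar_comm, hgE2 (X.bar e)])
  · exact Hom.ext (funext fun v => hpgV v) (funext fun e => hgE2 e)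
  · have h3 := key x₀ [] rfl
    simpa using h3.symm

theorem cov_comp {p : Hom Y W} {q : Hom X Y} (hp : p.IsCovering) (hq : q.IsCovering) :
    (p.comp q).IsCovering := by
  intro v
  have h := (hp (q.fV v)).comp (hq v)
  exact h

theorem aut_cov (a : Aut X) : a.toHom.IsCovering := by
  intro v
  have hinv1 : ∀ e, a.invHom.fE (a.toHom.fE e) = e := fun e =>
    congrFun (congrArg Hom.fE a.right_inv) e
  have hinv2 : ∀ e, a.toHom.fE (a.invHom.fE e) = e := fun e =>
    congrFun (congrArg Hom.fE a.left_inv) e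
  have hinv3 : ∀ w, a.invHom.fV (a.toHom.fV w) = w := fun w =>
    congrFun (congrArg Hom.fV a.right_inv) w
  refine ⟨fun e he => ?_, fun e _ e' _ hee => ?_, fun e' he' => ?_⟩
  · show X.init (a.toHom.fE e) = a.toHom.fV v
    rw [a.toHom.init_comm, he]
  · rw [← hinv1 e, hee, hinv1]
  · refine ⟨a.invHom.fE e', ?_, hinv2 e'⟩
    show X.init (a.invHom.fE e') = v
    rw [a.invHom.init_comm, he', hinv3]

section QuotCov

variable (X : SGraph) (Γ : Subgroup (Aut X))
  (hni : ∀ (γ : ↥Γ) (e : X.E), (γ : Aut X) • e ≠ X.bar e)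

theorem quot_cov (hfree : ∀ (γ : ↥Γ) (v : X.V), (γ : Aut X) • v = v → γ = 1) :
    (quotHom X Γ hni).IsCovering := by
  intro v
  refine ⟨fun e he => ?_, fun e he e' he' hee => ?_, fun c hc => ?_⟩
  · exact congrArg (Quotient.mk _) he
  · obtain ⟨γ, hγ⟩ := Quotient.exact hee
    have h2 : (↑γ : Aut X) • e' = e := hγ
    have he'' : X.init e' = v := he'
    have he2 : X.init e = v := he
    have hv : (↑γ : Aut X) • v = v := by
      have h3 : X.init ((↑γ : Aut X).toHom.fE e') = (↑γ : Aut X).toHom.fV (X.init e') :=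
        (↑γ : Aut X).toHom.init_comm e'
      rw [show (↑γ : Aut X).toHom.fE e' = e from h2, he2, he''] at h3
      exact h3.symm
    have hγ1 : γ = 1 := hfree γ v hv
    rw [← h2, hγ1]
    simp
  · obtain ⟨e, rfl⟩ := Quotient.exists_rep c
    obtain ⟨γ, hγ⟩ := Quotient.exact hc
    have hγ' : (↑γ : Aut X) • v = X.init e := hγ
    refine ⟨(↑γ⁻¹ : Aut X) • e, ?_, ?_⟩
    · show X.init ((↑γ⁻¹ : Aut X).toHom.fE e) = v
      rw [(↑γ⁻¹ : Aut X).toHom.init_comm, ← hγ']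
      show ((↑γ⁻¹ : Aut X) * (↑γ : Aut X)) • v = v
      rw [show (↑γ⁻¹ : Aut X) * (↑γ : Aut X) = 1 by
        rw [← Subgroup.coe_mul, inv_mul_cancel, Subgroup.coe_one], one_smul]
    · exact Quotient.sound ⟨γ⁻¹, rfl⟩

theorem quotHom_comp_mem {γ : Aut X} (hγ : γ ∈ Γ) :
    (quotHom X Γ hni).comp γ.toHom = quotHom X Γ hni := by
  refine Hom.ext (funext fun v => ?_) (funext fun e => ?_)
  · exact Quotient.sound ⟨⟨γ, hγ⟩, rfl⟩
  · exact Quotient.sound ⟨⟨γ, hγ⟩, rfl⟩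

theorem comp_eq_iff (htree : X.IsTreeS)
    (hfree : ∀ (γ : ↥Γ) (v : X.V), (γ : Aut X) • v = v → γ = 1) (g g' : Aut X) :
    (quotHom X Γ hni).comp g.toHom = (quotHom X Γ hni).comp g'.toHom ↔
      ∃ γ ∈ Γ, g' = γ * g := by
  constructor
  · intro h
    obtain ⟨x₀⟩ := htree.1
    have hcov := quot_cov X Γ hni hfree
    have hπ : (quotHom X Γ hni).comp (g' * g⁻¹).toHom = quotHom X Γ hni := by
      rw [Aut.mul_toHom, ← Hom.comp_assoc, ← h, Hom.comp_assoc, ← Aut.mul_toHom,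
        mul_inv_cancel]
      exact Hom.comp_id _
    have hx : (⟦(g' * g⁻¹).toHom.fV x₀⟧ : Quotient (MulAction.orbitRel ↥Γ X.V)) = ⟦x₀⟧ :=
      congrFun (congrArg Hom.fV hπ) x₀
    obtain ⟨γ, hγ⟩ := Quotient.exact hx
    have hlift : (quotHom X Γ hni).comp (g' * g⁻¹).toHom =
        (quotHom X Γ hni).comp (↑γ : Aut X).toHom := by
      rw [hπ, quotHom_comp_mem X Γ hni γ.2]
    have hEq : (g' * g⁻¹ : Aut X) = ↑γ :=
      Aut.toHom_inj (lift_unique hcov htree.2.1 hlift x₀ hγ.symm)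
    refine ⟨↑γ, γ.2, ?_⟩
    rw [← hEq, inv_mul_cancel_right]
  · rintro ⟨γ, hγΓ, rfl⟩
    rw [Aut.mul_toHom, ← Hom.comp_assoc, quotHom_comp_mem X Γ hni hγΓ]

end QuotCov

theorem mem_conjSubgroup {G : Type*} [Group G] (g x : G) (A : Subgroup G) :
    x ∈ conjSubgroup g A ↔ g * x * g⁻¹ ∈ A := by
  show x ∈ A.map (MulAut.conj g⁻¹).toMonoidHom ↔ _
  rw [Subgroup.mem_map]
  constructor
  · rintro ⟨a, ha, rfl⟩
    have h1 : g * ((MulAut.conj g⁻¹).toMonoidHom a) * g⁻¹ = a := by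
      simp only [MulEquiv.coe_toMonoidHom, MulAut.conj_apply, inv_inv]
      group
    rwa [h1]
  · intro h
    refine ⟨g * x * g⁻¹, h, ?_⟩
    simp only [MulEquiv.coe_toMonoidHom, MulAut.conj_apply, inv_inv]
    group

section Part4

variable (X : SGraph) (Γ : Subgroup (Aut X))
  (hni : ∀ (γ : ↥Γ) (e : X.E), (γ : Aut X) • e ≠ X.bar e)

theorem card_orbit_eq (htree : X.IsTreeS)
    (hfree : ∀ (γ : ↥Γ) (v : X.V), (γ : Aut X) • v = v → γ = 1) (g : Aut X) :
    Nat.card ↥{f : Hom X (quotSG X Γ hni) |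
        ∃ γ : ↥Γ, f = ((quotHom X Γ hni).comp g.toHom).comp (γ : Aut X).toHom} =
      (conjSubgroup g Γ).relIndex Γ := by
  classical
  set π := quotHom X Γ hni with hπdef
  set S := {f : Hom X (quotSG X Γ hni) |
    ∃ γ : ↥Γ, f = (π.comp g.toHom).comp (γ : Aut X).toHom} with hSdef
  have crit : ∀ a b : Aut X, π.comp a.toHom = π.comp b.toHom ↔ b * a⁻¹ ∈ Γ := by
    intro a b
    rw [hπdef, comp_eq_iff X Γ hni htree hfree a b]
    constructor
    · rintro ⟨γ, hγ, rfl⟩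
      simpa using hγ
    · intro h
      exact ⟨b * a⁻¹, h, by rw [inv_mul_cancel_right]⟩
  have hcompmul : ∀ (c : Aut X), (π.comp g.toHom).comp c.toHom = π.comp (g * c).toHom := by
    intro c
    rw [Aut.mul_toHom, Hom.comp_assoc]
  set H : Subgroup ↥Γ := (conjSubgroup g Γ).subgroupOf Γ with hHdef
  have hABC : ∀ a b : ↥Γ,
      (g * (↑b⁻¹ : Aut X)) * (g * (↑a⁻¹ : Aut X))⁻¹ =
        (g * (↑(a⁻¹ * b) : Aut X) * g⁻¹)⁻¹ := by
    intro a b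
    simp only [Subgroup.coe_mul, InvMemClass.coe_inv]
    group
  have keyiff : ∀ a b : ↥Γ,
      ((π.comp g.toHom).comp ((↑a⁻¹ : Aut X)).toHom =
        (π.comp g.toHom).comp ((↑b⁻¹ : Aut X)).toHom) ↔ a⁻¹ * b ∈ H := by
    intro a b
    rw [hcompmul, hcompmul, crit, hABC, inv_mem_iff, hHdef, Subgroup.mem_subgroupOf,
      mem_conjSubgroup]
  let F : ↥Γ → ↥S := fun γ =>
    ⟨(π.comp g.toHom).comp ((↑γ⁻¹ : Aut X)).toHom, ⟨γ⁻¹, rfl⟩⟩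
  let Fbar : (↥Γ ⧸ H) → ↥S := fun q => Quotient.liftOn' q F (fun a b hab =>
    Subtype.ext ((keyiff a b).mpr (QuotientGroup.leftRel_apply.mp hab)))
  have hbij : Function.Bijective Fbar := by
    constructor
    · rintro ⟨a⟩ ⟨b⟩ h
      apply Quotient.sound'
      rw [QuotientGroup.leftRel_apply]
      exact (keyiff a b).mp (congrArg Subtype.val h)
    · rintro ⟨f, γ, rfl⟩
      refine ⟨Quotient.mk'' γ⁻¹, Subtype.ext ?_⟩
      show (π.comp g.toHom).comp ((↑(γ⁻¹)⁻¹ : Aut X)).toHom = _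
      rw [inv_inv]
  calc Nat.card ↥S = Nat.card (↥Γ ⧸ H) := (Nat.card_eq_of_bijective Fbar hbij).symm
    _ = H.index := (Subgroup.index_eq_card H).symm
    _ = (conjSubgroup g Γ).relIndex Γ := rfl

theorem relindex_conj_ne_zero
    (hfree : ∀ (γ : ↥Γ) (v : X.V), (γ : Aut X) • v = v → γ = 1)
    (hquotV : Finite (Quotient (MulAction.orbitRel ↥Γ X.V)))
    (hV : Nonempty X.V) (g : Aut X)
    (hfin : (conjSubgroup g Γ).relIndex Γ ≠ 0) :
    Γ.relIndex (conjSubgroup g Γ) ≠ 0 := by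
  classical
  set K := conjSubgroup g Γ with hK
  have hKfree : ∀ (k : Aut X), k ∈ K → ∀ v : X.V, k • v = v → k = 1 := by
    intro k hk v hkv
    rw [hK, mem_conjSubgroup] at hk
    have hfix : (g * k * g⁻¹) • (g • v) = g • v := by
      have h1 : (g * k * g⁻¹) * g = g * k := by group
      rw [← mul_smul, h1, mul_smul, hkv]
    have h2 := hfree ⟨g * k * g⁻¹, hk⟩ (g • v) hfix
    have h3 : g * k * g⁻¹ = 1 := by
      have h4 := congrArg (Subtype.val) h2
      simpa using h4
    calc k = g⁻¹ * (g * k * g⁻¹) * g := by group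
      _ = 1 := by rw [h3]; group
  set Λ : Subgroup (Aut X) := Γ ⊓ K with hΛ
  have hfinA : Finite (↥Γ ⧸ K.subgroupOf Γ) := by
    have h4 : Nat.card (↥Γ ⧸ K.subgroupOf Γ) ≠ 0 := by
      rw [← Subgroup.index_eq_card]
      exact hfin
    exact (Nat.card_ne_zero.mp h4).2
  have hmapwd : ∀ (v v' : X.V), (MulAction.orbitRel ↥Λ X.V).r v v' →
      (⟦v⟧ : Quotient (MulAction.orbitRel ↥Γ X.V)) = ⟦v'⟧ := by
    rintro v v' ⟨m, rfl⟩
    exact Quotient.sound ⟨⟨↑m, (Subgroup.mem_inf.mp m.2).1⟩, rfl⟩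
  let qmap : Quotient (MulAction.orbitRel ↥Λ X.V) → Quotient (MulAction.orbitRel ↥Γ X.V) :=
    Quotient.lift (fun v => (⟦v⟧ : Quotient (MulAction.orbitRel ↥Γ X.V))) hmapwd
  haveI := hfinA
  haveI := hquotV
  haveI hfib : ∀ c : Quotient (MulAction.orbitRel ↥Γ X.V),
      Finite {x : Quotient (MulAction.orbitRel ↥Λ X.V) // qmap x = c} := by
    intro c
    have hinj : ∀ x : {x : Quotient (MulAction.orbitRel ↥Λ X.V) // qmap x = c},
        ∃ γ : ↥Γ, γ • (Quotient.out c) = Quotient.out x.1 := by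
      intro x
      have h1 : (⟦Quotient.out x.1⟧ : Quotient (MulAction.orbitRel ↥Γ X.V)) = c := by
        have h5 := x.2
        rw [← Quotient.out_eq x.1] at h5
        exact h5
      have h2 : (⟦Quotient.out x.1⟧ : Quotient (MulAction.orbitRel ↥Γ X.V))
          = ⟦Quotient.out c⟧ := by rw [h1, Quotient.out_eq]
      exact Quotient.exact h2
    set Φ : {x : Quotient (MulAction.orbitRel ↥Λ X.V) // qmap x = c} →
        (↥Γ ⧸ K.subgroupOf Γ) := fun x => Quotient.mk'' ((hinj x).choose)⁻¹ with hΦ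
    have hΦinj : Function.Injective Φ := by
      intro x y h
      have h6 := Quotient.exact' h
      rw [QuotientGroup.leftRel_apply, inv_inv, Subgroup.mem_subgroupOf] at h6
      set a := (hinj x).choose with ha
      set b := (hinj y).choose with hb
      have hxa : (↑a : Aut X) • (Quotient.out c) = Quotient.out x.1 := (hinj x).choose_spec
      have hyb : (↑b : Aut X) • (Quotient.out c) = Quotient.out y.1 := (hinj y).choose_spec
      have hmem : (↑(a * b⁻¹) : Aut X) ∈ Λ :=
        Subgroup.mem_inf.mpr ⟨(a * b⁻¹).2, h6⟩
      have hrel : (⟨↑(a * b⁻¹), hmem⟩ : ↥Λ) • (Quotient.out y.1) = Quotient.out x.1 := by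
        show (↑(a * b⁻¹) : Aut X) • (Quotient.out y.1) = Quotient.out x.1
        rw [← hyb, ← mul_smul]
        have h8 : (↑(a * b⁻¹) : Aut X) * ↑b = ↑a := by
          simp only [Subgroup.coe_mul, InvMemClass.coe_inv]
          group
        rw [h8, hxa]
      have h7 : (⟦Quotient.out x.1⟧ : Quotient (MulAction.orbitRel ↥Λ X.V))
          = ⟦Quotient.out y.1⟧ := Quotient.sound ⟨_, hrel⟩
      rw [Quotient.out_eq, Quotient.out_eq] at h7
      exact Subtype.ext h7
    exact Finite.of_injective Φ hΦinj
  have hQL : Finite (Quotient (MulAction.orbitRel ↥Λ X.V)) :=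
    Finite.of_equiv _ (Equiv.sigmaFiberEquiv qmap)
  obtain ⟨v₁⟩ := hV
  have hwd : ∀ a b : ↥K, @Setoid.r _ (QuotientGroup.leftRel (Γ.subgroupOf K)) a b →
      (⟦(↑a⁻¹ : Aut X) • v₁⟧ : Quotient (MulAction.orbitRel ↥Λ X.V)) =
        ⟦(↑b⁻¹ : Aut X) • v₁⟧ := by
    intro a b hab
    rw [QuotientGroup.leftRel_apply] at hab
    have hmem : (↑(a⁻¹ * b) : Aut X) ∈ Λ :=
      Subgroup.mem_inf.mpr ⟨hab, (a⁻¹ * b).2⟩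
    refine Quotient.sound ⟨⟨↑(a⁻¹ * b), hmem⟩, ?_⟩
    show (↑(a⁻¹ * b) : Aut X) • ((↑b⁻¹ : Aut X) • v₁) = (↑a⁻¹ : Aut X) • v₁
    rw [← mul_smul]
    congr 1
    simp only [Subgroup.coe_mul, InvMemClass.coe_inv]
    group
  let Ψ : (↥K ⧸ Γ.subgroupOf K) → Quotient (MulAction.orbitRel ↥Λ X.V) :=
    fun q => Quotient.liftOn' q
      (fun a => (⟦(↑a⁻¹ : Aut X) • v₁⟧ : Quotient (MulAction.orbitRel ↥Λ X.V))) hwd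
  have hΨinj : Function.Injective Ψ := by
    rintro ⟨a⟩ ⟨b⟩ h
    have h' : (⟦(↑a⁻¹ : Aut X) • v₁⟧ : Quotient (MulAction.orbitRel ↥Λ X.V)) =
        ⟦(↑b⁻¹ : Aut X) • v₁⟧ := h
    obtain ⟨m, hm⟩ := Quotient.exact h'
    have hm' : (↑m : Aut X) • ((↑b⁻¹ : Aut X) • v₁) = (↑a⁻¹ : Aut X) • v₁ := hm
    have hc1 : (↑a⁻¹ : Aut X) = (↑a : Aut X)⁻¹ := by simp
    have hc2 : (↑b⁻¹ : Aut X) = (↑b : Aut X)⁻¹ := by simp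
    rw [hc1, hc2] at hm'
    have hfix : ((↑a : Aut X) * ↑m * (↑b : Aut X)⁻¹) • v₁ = v₁ := by
      rw [mul_smul, mul_smul, hm', smul_inv_smul]
    have hmemK : ((↑a : Aut X) * ↑m * (↑b : Aut X)⁻¹) ∈ K :=
      K.mul_mem (K.mul_mem a.2 (Subgroup.mem_inf.mp m.2).2) (K.inv_mem b.2)
    have h1 := hKfree _ hmemK v₁ hfix
    apply Quotient.sound'
    rw [QuotientGroup.leftRel_apply, Subgroup.mem_subgroupOf]
    have h2 : (↑(a⁻¹ * b) : Aut X) = ↑m := by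
      simp only [Subgroup.coe_mul, InvMemClass.coe_inv]
      calc (↑a : Aut X)⁻¹ * ↑b = (↑a)⁻¹ * (((↑a : Aut X) * ↑m * (↑b : Aut X)⁻¹) * ↑b) := by
            rw [h1]; group
        _ = ↑m := by group
    rw [h2]
    exact (Subgroup.mem_inf.mp m.2).1
  have hfinB : Finite (↥K ⧸ Γ.subgroupOf K) := Finite.of_injective Ψ hΨinj
  show (Γ.subgroupOf K).index ≠ 0
  rw [Subgroup.index_eq_card, Nat.card_ne_zero]
  exact ⟨⟨Quotient.mk'' 1⟩, hfinB⟩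

end Part4

end SGraph

open SGraph

/-- **Lemma.** Let `T` be a uniform tree (in the sense of Serre), `G = Aut(T)`,
`Γ ⊆ G` a torsion-free uniform lattice (a subgroup acting freely and without inversions
with finite quotient graph), `Y = Γ\T`, and `π : T → Y` the canonical projection. The
group `Γ` acts on the set of covering maps `T → Y` by precomposition. Then the bijection
`Γg ↦ π ∘ g` between `Γ\G` and the covering maps `T → Y` restricts, for every `n ≥ 1`,
to a bijection between `Γ\Comm_n(Γ, G)` and the set of coverings whose `Γ`-orbit has
size exactly `n`; explicitly (the bijectivity on all of `Γ\G` being part of the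
statement), `g ∈ Comm_n(Γ, G)` if and only if the `Γ`-orbit of `π ∘ g` has exactly `n`
elements. -/
theorem tree_commN_equiv_coverings_orbit (X : SGraph) (htree : X.IsTreeS)
    (hlf : X.LocallyFiniteS) (Γ : Subgroup (Aut X))
    (hfree : ∀ (γ : ↥Γ) (v : X.V), (γ : Aut X) • v = v → γ = 1)
    (hni : ∀ (γ : ↥Γ) (e : X.E), (γ : Aut X) • e ≠ X.bar e)
    (hquotV : Finite (Quotient (MulAction.orbitRel ↥Γ X.V)))
    (hquotE : Finite (Quotient (MulAction.orbitRel ↥Γ X.E))) :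
    (∀ g : Aut X, ((quotHom X Γ hni).comp g.toHom).IsCovering) ∧
    (∀ f : Hom X (quotSG X Γ hni), f.IsCovering →
        ∃ g : Aut X, f = (quotHom X Γ hni).comp g.toHom) ∧
    (∀ g g' : Aut X,
        (quotHom X Γ hni).comp g.toHom = (quotHom X Γ hni).comp g'.toHom ↔
          ∃ γ ∈ Γ, g' = γ * g) ∧
    (∀ n : ℕ, 1 ≤ n → ∀ g : Aut X,
        g ∈ commSet Γ n ↔
          Nat.card
            ↥{f : Hom X (quotSG X Γ hni) |
              ∃ γ : ↥Γ, f = ((quotHom X Γ hni).comp g.toHom).comp (γ : Aut X).toHom} =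
            n) := by
  refine ⟨?_, ?_, ?_, ?_⟩
  · intro g
    exact cov_comp (quot_cov X Γ hni hfree) (aut_cov g)
  · intro f hf
    obtain ⟨x₀⟩ := htree.1
    have h₀ : (quotHom X Γ hni).fV (Quotient.out (f.fV x₀)) = f.fV x₀ :=
      Quotient.out_eq _
    obtain ⟨gt, hgt, hgtx⟩ :=
      exists_lift htree (quot_cov X Γ hni hfree) f x₀ (Quotient.out (f.fV x₀)) h₀
    obtain ⟨hv, hhinv, hhx⟩ :=
      exists_lift htree hf (quotHom X Γ hni) (Quotient.out (f.fV x₀)) x₀ h₀.symm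
    have hid1 : gt.comp hv = Hom.id X := by
      refine lift_unique (quot_cov X Γ hni hfree) htree.2.1 ?_ (Quotient.out (f.fV x₀)) ?_
      · rw [← Hom.comp_assoc, hgt, hhinv, Hom.comp_id]
      · show gt.fV (hv.fV (Quotient.out (f.fV x₀))) = _
        rw [hhx, hgtx]
        rfl
    have hid2 : hv.comp gt = Hom.id X := by
      refine lift_unique hf htree.2.1 ?_ x₀ ?_
      · rw [← Hom.comp_assoc, hhinv, hgt, Hom.comp_id]
      · show hv.fV (gt.fV x₀) = _
        rw [hgtx, hhx]
        rfl
    exact ⟨⟨gt, hv, hid1, hid2⟩, hgt.symm⟩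
  · exact fun g g' => comp_eq_iff X Γ hni htree hfree g g'
  · intro n hn g
    have hcard := card_orbit_eq X Γ hni htree hfree g
    constructor
    · rintro ⟨⟨h1, h2⟩, h3⟩
      rw [hcard]
      exact h3
    · intro h
      have h3 : (conjSubgroup g Γ).relIndex Γ = n := by rw [← hcard]; exact h
      show ((conjSubgroup g Γ).relIndex Γ ≠ 0 ∧ Γ.relIndex (conjSubgroup g Γ) ≠ 0) ∧
        commIndex Γ g = n
      refine ⟨⟨?_, ?_⟩, h3⟩
      · rw [h3]; omega
      · exact relindex_conj_ne_zero X Γ hfree hquotV htree.1 g (by rw [h3]; omega)
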